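/- Let q_1, …, q_N ∈ ℝ^m be unit vectors whose span equals a subspace V ⊆ ℝ^m, and let ψ ∈ V with ψ ≠ 0. Then ‖∏_{k=1}^N (I - q_k q_kᵀ) ψ‖₂ < ‖ψ‖₂; i.e., there exists γ ∈ (0,1), depending on q_1,…,q_N, such that ‖∏_{k=1}^N (I - q_k q_kᵀ) ψ‖₂ ≤ γ ‖ψ‖₂ for all ψ ∈ V. -/

import Mathlib

open Matrix

variable {m : ℕ}

lemma factor_apply (q x : EuclideanSpace ℝ (Fin m)) :
    Matrix.toEuclideanLin ((1 : Matrix (Fin m) (Fin m) ℝ) - Matrix.vecMulVec q q) x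
      = x - (inner ℝ q x : ℝ) • q := by
  ext i
  simp [Matrix.toEuclideanLin_apply, Matrix.sub_mulVec, Matrix.one_mulVec,
    Matrix.mulVec, Matrix.vecMulVec, dotProduct, PiLp.inner_apply,
    Finset.mul_sum, Finset.sum_mul, mul_comm, mul_left_comm, mul_assoc]

lemma factor_norm_sq (q x : EuclideanSpace ℝ (Fin m)) (hq : ‖q‖ = 1) :
    ‖Matrix.toEuclideanLin ((1 : Matrix (Fin m) (Fin m) ℝ) - Matrix.vecMulVec q q) x‖ ^ 2
      = ‖x‖ ^ 2 - (inner ℝ q x : ℝ) ^ 2 := by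
  rw [factor_apply]
  rw [norm_sub_sq_real]
  have h1 : (inner ℝ x ((inner ℝ q x : ℝ) • q) : ℝ) = (inner ℝ q x : ℝ) ^ 2 := by
    rw [real_inner_smul_right, real_inner_comm]; ring
  have h2 : ‖(inner ℝ q x : ℝ) • q‖ ^ 2 = (inner ℝ q x : ℝ) ^ 2 := by
    rw [norm_smul, hq]; simp [sq_abs, Real.norm_eq_abs]
  rw [h1, h2]; ring

lemma factor_contract (q x : EuclideanSpace ℝ (Fin m)) (hq : ‖q‖ = 1) :
    ‖Matrix.toEuclideanLin ((1 : Matrix (Fin m) (Fin m) ℝ) - Matrix.vecMulVec q q) x‖ ≤ ‖x‖ ∧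
    (‖Matrix.toEuclideanLin ((1 : Matrix (Fin m) (Fin m) ℝ) - Matrix.vecMulVec q q) x‖ = ‖x‖ →
      Matrix.toEuclideanLin ((1 : Matrix (Fin m) (Fin m) ℝ) - Matrix.vecMulVec q q) x = x) := by
  have hsq := factor_norm_sq q x hq
  constructor
  · nlinarith [hsq, sq_nonneg (inner ℝ q x : ℝ), norm_nonneg x,
      norm_nonneg (Matrix.toEuclideanLin ((1 : Matrix (Fin m) (Fin m) ℝ) - Matrix.vecMulVec q q) x)]
  · intro he
    have hc : (inner ℝ q x : ℝ) = 0 := by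
      have : ‖x‖ ^ 2 = ‖x‖ ^ 2 - (inner ℝ q x : ℝ) ^ 2 := by rw [← hsq, he]
      nlinarith [sq_nonneg (inner ℝ q x : ℝ)]
    rw [factor_apply, hc, zero_smul, sub_zero]

lemma toEuclideanLin_one' : (Matrix.toEuclideanLin (1 : Matrix (Fin m) (Fin m) ℝ)) = LinearMap.id := by
  apply LinearMap.ext; intro x
  ext i
  simp [Matrix.toEuclideanLin_apply, Matrix.one_mulVec]

lemma toEuclideanLin_mul' (A B : Matrix (Fin m) (Fin m) ℝ) (x : EuclideanSpace ℝ (Fin m)) :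
    Matrix.toEuclideanLin (A * B) x = Matrix.toEuclideanLin A (Matrix.toEuclideanLin B x) := by
  ext i
  simp [Matrix.toEuclideanLin_apply, Matrix.mulVec_mulVec]

lemma list_contract (l : List (Matrix (Fin m) (Fin m) ℝ))
    (h : ∀ A ∈ l, ∀ x : EuclideanSpace ℝ (Fin m),
      ‖Matrix.toEuclideanLin A x‖ ≤ ‖x‖ ∧
      (‖Matrix.toEuclideanLin A x‖ = ‖x‖ → Matrix.toEuclideanLin A x = x)) :
    ∀ x : EuclideanSpace ℝ (Fin m),
      ‖Matrix.toEuclideanLin l.prod x‖ ≤ ‖x‖ ∧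
      (‖Matrix.toEuclideanLin l.prod x‖ = ‖x‖ →
        Matrix.toEuclideanLin l.prod x = x ∧ ∀ A ∈ l, Matrix.toEuclideanLin A x = x) := by
  induction l with
  | nil =>
    intro x
    simp [toEuclideanLin_one']
  | cons A l ih =>
    intro x
    have hA := h A (List.mem_cons_self)
    have hl : ∀ B ∈ l, ∀ x : EuclideanSpace ℝ (Fin m),
        ‖Matrix.toEuclideanLin B x‖ ≤ ‖x‖ ∧
        (‖Matrix.toEuclideanLin B x‖ = ‖x‖ → Matrix.toEuclideanLin B x = x) :=
      fun B hB => h B (List.mem_cons_of_mem A hB)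
    have ihx := ih hl x
    rw [List.prod_cons, toEuclideanLin_mul' A l.prod x]
    set y := Matrix.toEuclideanLin l.prod x with hy
    have h1 : ‖Matrix.toEuclideanLin A y‖ ≤ ‖y‖ := (hA y).1
    refine ⟨h1.trans ihx.1, fun he => ?_⟩
    have hyx : ‖y‖ = ‖x‖ := le_antisymm ihx.1 (he ▸ h1)
    obtain ⟨hyeq, hall⟩ := ihx.2 hyx
    rw [hyeq] at he ⊢
    have hAx := (hA x).2 he
    exact ⟨hAx, fun B hB => by
      rcases List.mem_cons.mp hB with rfl | hB
      · exact hAx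
      · exact hall B hB⟩


/-- If unit vectors `q 1, …, q N` span the subspace `V` then the ordered
product `∏_{k=1}^N (I - q_k q_kᵀ)` (with `q 0` applied first) strictly contracts every
nonzero `ψ ∈ V`; equivalently there exists `γ ∈ (0,1)` with
`‖∏ (I - q_k q_kᵀ) ψ‖₂ ≤ γ ‖ψ‖₂` for all `ψ ∈ V`. -/
theorem stmt5 {m N : ℕ} (q : Fin N → EuclideanSpace ℝ (Fin m))
    (hq : ∀ k, ‖q k‖ = 1)
    (V : Submodule ℝ (EuclideanSpace ℝ (Fin m)))
    (hspan : Submodule.span ℝ (Set.range q) = V) :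
    (∀ ψ ∈ V, ψ ≠ 0 →
      ‖Matrix.toEuclideanLin
          ((List.ofFn fun k : Fin N =>
            (1 : Matrix (Fin m) (Fin m) ℝ) - Matrix.vecMulVec (q k) (q k)).reverse.prod) ψ‖
        < ‖ψ‖) ∧
    ∃ γ ∈ Set.Ioo (0 : ℝ) 1, ∀ ψ ∈ V,
      ‖Matrix.toEuclideanLin
          ((List.ofFn fun k : Fin N =>
            (1 : Matrix (Fin m) (Fin m) ℝ) - Matrix.vecMulVec (q k) (q k)).reverse.prod) ψ‖
        ≤ γ * ‖ψ‖ := by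
  set l := (List.ofFn fun k : Fin N =>
      (1 : Matrix (Fin m) (Fin m) ℝ) - Matrix.vecMulVec (q k) (q k)).reverse with hl
  set T := Matrix.toEuclideanLin l.prod with hT
  have hmem : ∀ A ∈ l, ∃ k, A = (1 : Matrix (Fin m) (Fin m) ℝ) - Matrix.vecMulVec (q k) (q k) := by
    intro A hA
    rw [hl, List.mem_reverse, List.mem_ofFn] at hA
    obtain ⟨k, hk⟩ := hA
    exact ⟨k, hk.symm⟩
  have hprop : ∀ A ∈ l, ∀ x : EuclideanSpace ℝ (Fin m),
      ‖Matrix.toEuclideanLin A x‖ ≤ ‖x‖ ∧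
      (‖Matrix.toEuclideanLin A x‖ = ‖x‖ → Matrix.toEuclideanLin A x = x) := by
    intro A hA x
    obtain ⟨k, rfl⟩ := hmem A hA
    exact factor_contract (q k) x (hq k)
  have hcontr := list_contract l hprop
  -- strict part
  have hstrict : ∀ ψ ∈ V, ψ ≠ 0 → ‖T ψ‖ < ‖ψ‖ := by
    intro ψ hψV hψ0
    rcases lt_or_eq_of_le (hcontr ψ).1 with h | h
    · exact h
    · exfalso
      obtain ⟨-, hall⟩ := (hcontr ψ).2 h
      have hQ : ∀ k, (inner ℝ (q k) ψ : ℝ) = 0 := by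
        intro k
        have hmemk : ((1 : Matrix (Fin m) (Fin m) ℝ) - Matrix.vecMulVec (q k) (q k)) ∈ l := by
          rw [hl, List.mem_reverse, List.mem_ofFn]
          exact ⟨k, rfl⟩
        have := hall _ hmemk
        rw [factor_apply] at this
        have hz : (inner ℝ (q k) ψ : ℝ) • q k = 0 := by
          have := sub_eq_self.mp this
          exact this
        rcases smul_eq_zero.mp hz with h0 | h0
        · exact h0
        · exfalso
          have h1 := hq k
          rw [h0, norm_zero] at h1
          norm_num at h1
      have hperp : ∀ v ∈ V, (inner ℝ v ψ : ℝ) = 0 := by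
        intro v hv
        rw [← hspan] at hv
        induction hv using Submodule.span_induction with
        | mem x hx => obtain ⟨k, rfl⟩ := hx; exact hQ k
        | zero => simp
        | add x y _ _ hx hy => rw [inner_add_left, hx, hy]; ring
        | smul c x _ hx => rw [real_inner_smul_left, hx]; ring
      exact hψ0 (inner_self_eq_zero.mp (hperp ψ hψV))
  refine ⟨hstrict, ?_⟩
  -- gamma part
  by_cases hV : V = ⊥
  · refine ⟨1/2, by norm_num, fun ψ hψ => ?_⟩
    have : ψ = 0 := by rwa [hV, Submodule.mem_bot] at hψ
    simp [this]
  · obtain ⟨v, hvV, hv0⟩ := Submodule.exists_mem_ne_zero_of_ne_bot hV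
    set S : Set (EuclideanSpace ℝ (Fin m)) := (V : Set (EuclideanSpace ℝ (Fin m))) ∩ Metric.sphere 0 1 with hS
    have hScomp : IsCompact S :=
      (isCompact_sphere (0 : EuclideanSpace ℝ (Fin m)) 1).inter_left V.closed_of_finiteDimensional
    have hSne : S.Nonempty := by
      refine ⟨‖v‖⁻¹ • v, V.smul_mem _ hvV, ?_⟩
      simp only [Metric.mem_sphere, dist_zero_right, norm_smul, norm_inv, norm_norm]
      rw [inv_mul_cancel₀ (norm_ne_zero_iff.mpr hv0)]
    have hcont : Continuous fun x : EuclideanSpace ℝ (Fin m) => ‖T x‖ :=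
      T.continuous_of_finiteDimensional.norm
    obtain ⟨x0, hx0S, hmax⟩ := hScomp.exists_isMaxOn hSne hcont.continuousOn
    obtain ⟨hx0V, hx0sph⟩ := hx0S
    have hx0norm : ‖x0‖ = 1 := by simpa [dist_zero_right] using hx0sph
    have hx00 : x0 ≠ 0 := fun h => by simp [h] at hx0norm
    have hγ0 : ‖T x0‖ < 1 := by
      have := hstrict x0 hx0V hx00
      rwa [hx0norm] at this
    refine ⟨max ‖T x0‖ (1/2), ⟨lt_max_of_lt_right (by norm_num), max_lt hγ0 (by norm_num)⟩,
      fun ψ hψ => ?_⟩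
    by_cases hψ0 : ψ = 0
    · simp [hψ0]
    · have hu : ‖ψ‖⁻¹ • ψ ∈ S := by
        refine ⟨V.smul_mem _ hψ, ?_⟩
        simp only [Metric.mem_sphere, dist_zero_right, norm_smul, norm_inv, norm_norm]
        rw [inv_mul_cancel₀ (norm_ne_zero_iff.mpr hψ0)]
      have hle : ‖T (‖ψ‖⁻¹ • ψ)‖ ≤ ‖T x0‖ := hmax hu
      rw [_root_.map_smul, norm_smul, norm_inv, norm_norm] at hle
      have hψpos : (0:ℝ) < ‖ψ‖ := norm_pos_iff.mpr hψ0
      calc ‖T ψ‖ = ‖ψ‖ * (‖ψ‖⁻¹ * ‖T ψ‖) := by field_simp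
        _ ≤ ‖ψ‖ * ‖T x0‖ := by nlinarith
        _ ≤ ‖ψ‖ * max ‖T x0‖ (1/2) := by
            have := le_max_left ‖T x0‖ (1/2:ℝ); nlinarith
        _ = max ‖T x0‖ (1/2) * ‖ψ‖ := mul_comm _ _
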